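/- Let A : V → V be an invertible k-linear operator on a normed K-vector space V, and suppose ||·|| is a norm such that ||A||·||A⁻¹|| = 1. Then ||A|| equals the infimum norm ||A||_inf = inf{||A||' : ||·||' a norm on V}. -/

import Mathlib

open scoped Classical
noncomputable section

def lval {k : Type*} [Field k] (ε : ℝ) (f : LaurentSeries k) : ℝ :=
  if f = 0 then 0 else ε ^ (HahnSeries.order f)

structure NANorm (k : Type*) [Field k] (ε : ℝ) (V : Type*) [AddCommGroup V]
    [Module (LaurentSeries k) V] where
  N : V → ℝ
  pos : ∀ v : V, v ≠ 0 → 0 < N v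
  map_zero' : N 0 = 0
  ultra : ∀ v w : V, N (v + w) ≤ max (N v) (N w)
  smul' : ∀ (f : LaurentSeries k) (v : V), N (f • v) = lval ε f * N v

/-- The operator norm `‖A‖ = sup_{v ≠ 0} ‖A v‖ / ‖v‖` of a map `A : V → V`
with respect to a non-archimedean norm on `V`. -/
def opNorm {k : Type*} [Field k] {ε : ℝ} {V : Type*} [AddCommGroup V]
    [Module (LaurentSeries k) V] (nn : NANorm k ε V) (A : V → V) : ℝ :=
  sSup {r : ℝ | ∃ v : V, v ≠ 0 ∧ r = nn.N (A v) / nn.N v}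

/-- The infimum norm of an operator: the infimum over all non-archimedean norms
on `V` of the corresponding operator norm. -/
def infNorm {k : Type*} [Field k] (ε : ℝ) {V : Type*} [AddCommGroup V]
    [Module (LaurentSeries k) V] (A : V → V) : ℝ :=
  sInf {r : ℝ | ∃ nn : NANorm k ε V, r = opNorm nn A}

open scoped Multiplicative NNReal

local notation "ℤₘ₀" => WithZero (Multiplicative ℤ)

namespace NAProofAux

variable {k : Type*} [Field k]


theorem lval_nonneg {ε : ℝ} (hε0 : 0 < ε) (f : LaurentSeries k) : 0 ≤ lval ε f := by
  unfold lval
  split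
  · exact le_rfl
  · exact (zpow_pos hε0 _).le

theorem lval_pos {ε : ℝ} (hε0 : 0 < ε) {f : LaurentSeries k} (hf : f ≠ 0) : 0 < lval ε f := by
  unfold lval
  rw [if_neg hf]
  exact zpow_pos hε0 _

theorem lval_neg_one {ε : ℝ} : lval ε (-1 : LaurentSeries k) = 1 := by
  have h : (-1 : LaurentSeries k) ≠ 0 := by
    simp
  rw [lval, if_neg h]
  rw [show ((-1 : LaurentSeries k) = -(1 : LaurentSeries k)) from rfl, HahnSeries.order_neg,
    HahnSeries.order_one, zpow_zero]

theorem valued_eq {f : LaurentSeries k} (hf : f ≠ 0) :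
    (Valued.v f : ℤₘ₀) = ((Multiplicative.ofAdd (-f.order) : Multiplicative ℤ) : ℤₘ₀) := by
  have h1 : Valued.v f ≤ ((Multiplicative.ofAdd (-f.order) : Multiplicative ℤ) : ℤₘ₀) :=
    (LaurentSeries.valuation_le_iff_coeff_lt_eq_zero k).mpr fun n hn =>
      HahnSeries.coeff_eq_zero_of_lt_order hn
  have h2 : ¬ Valued.v f ≤ ((Multiplicative.ofAdd (-(f.order + 1)) : Multiplicative ℤ) : ℤₘ₀) := by
    intro hc
    exact hf (HahnSeries.coeff_order_eq_zero.mp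
      ((LaurentSeries.valuation_le_iff_coeff_lt_eq_zero k).mp hc f.order (by omega)))
  have h0 : Valued.v f ≠ 0 := (Valuation.ne_zero_iff _).mpr hf
  obtain ⟨m, hm⟩ := WithZero.ne_zero_iff_exists.mp h0
  rw [← hm] at h1 h2 ⊢
  rw [WithZero.coe_le_coe] at h1
  rw [WithZero.coe_le_coe] at h2
  rw [WithZero.coe_inj]
  have h1' : Multiplicative.toAdd m ≤ -f.order := h1
  have h2' : ¬ Multiplicative.toAdd m ≤ -(f.order + 1) := h2
  have : Multiplicative.toAdd m = -f.order := by omega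
  rw [← ofAdd_toAdd m, this]



variable (k) in
/-- nonzero base for the rank-one hom -/
def epsinv (ε : ℝ) (hε0 : 0 < ε) : ℝ≥0 := (⟨ε, hε0.le⟩ : ℝ≥0)⁻¹

theorem one_lt_epsinv {ε : ℝ} (hε0 : 0 < ε) (hε1 : ε < 1) : 1 < epsinv ε hε0 := by
  rw [epsinv]
  exact (one_lt_inv₀ (by exact_mod_cast hε0)).mpr (by exact_mod_cast hε1)

variable (k) in
def rankOne (ε : ℝ) (hε0 : 0 < ε) (hε1 : ε < 1) :
    Valuation.RankOne (Valued.v : Valuation (LaurentSeries k) ℤₘ₀) where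
  hom' := (WithZeroMulInt.toNNReal (ne_zero_of_lt (one_lt_epsinv hε0 hε1))).comp
    MonoidWithZeroHom.ValueGroup₀.embedding
  strictMono' := (WithZeroMulInt.toNNReal_strictMono (one_lt_epsinv hε0 hε1)).comp
    MonoidWithZeroHom.ValueGroup₀.embedding_strictMono
  exists_val_nontrivial := by
    refine ⟨HahnSeries.single (1 : ℤ) 1, ?_, ?_⟩
    · rw [LaurentSeries.valuation_single_zpow]
      exact WithZero.coe_ne_zero
    · rw [LaurentSeries.valuation_single_zpow]
      intro hc
      rw [← WithZero.coe_one, WithZero.exp, WithZero.coe_inj] at hc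
      have h2 : (-1 : ℤ) = 0 := by
        have := congrArg Multiplicative.toAdd hc
        simpa using this
      omega

variable (k) in
@[reducible]
def nfK (ε : ℝ) (hε0 : 0 < ε) (hε1 : ε < 1) : NontriviallyNormedField (LaurentSeries k) :=
  @Valued.toNontriviallyNormedField _ _ ℤₘ₀ _ _ (rankOne k ε hε0 hε1)

theorem nfK_norm (ε : ℝ) (hε0 : 0 < ε) (hε1 : ε < 1) (f : LaurentSeries k) :
    @Norm.norm _ (nfK k ε hε0 hε1).toNorm f = lval ε f := by
  by_cases hf : f = 0
  · subst hf
    show ((WithZeroMulInt.toNNReal (ne_zero_of_lt (one_lt_epsinv hε0 hε1))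
      (MonoidWithZeroHom.ValueGroup₀.embedding
        ((Valued.v : Valuation (LaurentSeries k) ℤₘ₀).restrict 0)) : ℝ≥0) : ℝ) = lval ε 0
    rw [Valuation.embedding_restrict, map_zero, map_zero]
    simp [lval]
  · show ((WithZeroMulInt.toNNReal (ne_zero_of_lt (one_lt_epsinv hε0 hε1))
      (MonoidWithZeroHom.ValueGroup₀.embedding
        ((Valued.v : Valuation (LaurentSeries k) ℤₘ₀).restrict f)) : ℝ≥0) : ℝ) = lval ε f
    rw [Valuation.embedding_restrict]
    rw [valued_eq hf, WithZeroMulInt.toNNReal_neg_apply _ WithZero.coe_ne_zero]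
    rw [WithZero.unzero_coe, toAdd_ofAdd]
    rw [lval, if_neg hf, epsinv]
    push_cast
    show (ε⁻¹) ^ (-f.order) = ε ^ f.order
    rw [zpow_neg, inv_zpow, inv_inv]



variable {V : Type*} [AddCommGroup V] [Module (LaurentSeries k) V] {ε : ℝ}

theorem N_nonneg (nn : NANorm k ε V) (v : V) : 0 ≤ nn.N v := by
  by_cases hv : v = 0
  · rw [hv, nn.map_zero']
  · exact (nn.pos v hv).le

theorem N_add_le (nn : NANorm k ε V) (v w : V) : nn.N (v + w) ≤ nn.N v + nn.N w :=
  le_trans (nn.ultra v w)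
    (max_le (le_add_of_nonneg_right (N_nonneg nn w)) (le_add_of_nonneg_left (N_nonneg nn v)))

theorem N_sum_le (nn : NANorm k ε V) {ι : Type*} (s : Finset ι) (x : ι → V) :
    nn.N (∑ i ∈ s, x i) ≤ ∑ i ∈ s, nn.N (x i) := by
  classical
  induction s using Finset.cons_induction with
  | empty => simp [nn.map_zero']
  | cons a s ha ih =>
    rw [Finset.sum_cons, Finset.sum_cons]
    exact le_trans (N_add_le nn _ _) (add_le_add le_rfl ih)

@[reducible]
def ngV (nn : NANorm k ε V) : NormedAddCommGroup V :=
  AddGroupNorm.toNormedAddCommGroup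
  { toFun := nn.N
    map_zero' := nn.map_zero'
    add_le' := N_add_le nn
    neg' := fun v => by
      rw [← neg_one_smul (LaurentSeries k) v, nn.smul', lval_neg_one, one_mul]
    eq_zero_of_map_eq_zero' := fun v hv => by
      by_contra hne
      exact (nn.pos v hne).ne' hv }

theorem coord_bound (ε : ℝ) (hε0 : 0 < ε) (hε1 : ε < 1)
    [FiniteDimensional (LaurentSeries k) V] (nn : NANorm k ε V)
    (l : V →ₗ[LaurentSeries k] LaurentSeries k) :
    ∃ E : ℝ, 0 < E ∧ ∀ v : V, lval ε (l v) ≤ E * nn.N v := by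
  letI nfi : NontriviallyNormedField (LaurentSeries k) := nfK k ε hε0 hε1
  letI ngi : NormedAddCommGroup V := ngV nn
  have hnV : ∀ v : V, ‖v‖ = nn.N v := fun v => rfl
  have hnK : ∀ g : LaurentSeries k, ‖g‖ = lval ε g := fun g => nfK_norm ε hε0 hε1 g
  letI : NormedSpace (LaurentSeries k) V :=
    { toModule := ‹Module (LaurentSeries k) V›
      norm_smul_le := fun f v => by
        rw [hnK f]
        exact le_of_eq (nn.smul' f v) }
  haveI : CompleteSpace (LaurentSeries k) := LaurentSeries.instLaurentSeriesComplete
  have hcont : Continuous l := l.continuous_of_finiteDimensional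
  obtain ⟨C, hC0, hC⟩ := ContinuousLinearMap.bound ⟨l, hcont⟩
  refine ⟨C, hC0, fun v => ?_⟩
  have := hC v
  rwa [hnK] at this

theorem NANorm.exists_le (hε0 : 0 < ε) (hε1 : ε < 1)
    [FiniteDimensional (LaurentSeries k) V] (nn1 nn2 : NANorm k ε V) :
    ∃ C : ℝ, 0 < C ∧ ∀ v : V, nn1.N v ≤ C * nn2.N v := by
  classical
  let b := Module.finBasis (LaurentSeries k) V
  choose E hE0 hE using fun i => coord_bound ε hε0 hε1 nn2 (b.coord i)
  have hsum : 0 ≤ ∑ i, E i * nn1.N (b i) :=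
    Finset.sum_nonneg fun i _ => mul_nonneg (hE0 i).le (N_nonneg nn1 _)
  refine ⟨(∑ i, E i * nn1.N (b i)) + 1, by linarith, fun v => ?_⟩
  have h2 : 0 ≤ nn2.N v := N_nonneg nn2 v
  calc nn1.N v = nn1.N (∑ i, b.repr v i • b i) := by rw [b.sum_repr v]
    _ ≤ ∑ i, nn1.N (b.repr v i • b i) := N_sum_le nn1 _ _
    _ = ∑ i, lval ε (b.repr v i) * nn1.N (b i) := by
        refine Finset.sum_congr rfl fun i _ => nn1.smul' _ _
    _ ≤ ∑ i, (E i * nn2.N v) * nn1.N (b i) := by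
        refine Finset.sum_le_sum fun i _ => mul_le_mul_of_nonneg_right ?_ (N_nonneg nn1 _)
        simpa [Module.Basis.coord_apply] using hE i v
    _ = (∑ i, E i * nn1.N (b i)) * nn2.N v := by
        rw [Finset.sum_mul]
        exact Finset.sum_congr rfl fun i _ => by ring
    _ ≤ ((∑ i, E i * nn1.N (b i)) + 1) * nn2.N v := by
        refine mul_le_mul_of_nonneg_right (by linarith) h2



end NAProofAux

/-- If `‖A‖ · ‖A⁻¹‖ = 1` for some norm, then `‖A‖` equals the infimum norm of `A`. -/
theorem opNorm_eq_infNorm_of_mul_inv_eq_one (k V : Type*) [Field k] [IsAlgClosed k] [CharZero k]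
    [AddCommGroup V] [Module (LaurentSeries k) V] [Module k V]
    [IsScalarTower k (LaurentSeries k) V] [FiniteDimensional (LaurentSeries k) V]
    (ε : ℝ) (hε0 : 0 < ε) (hε1 : ε < 1)
    (nn : NANorm k ε V) (A : V ≃ₗ[k] V)
    (h : opNorm nn (⇑A) * opNorm nn (⇑A.symm) = 1) :
    opNorm nn (⇑A) = infNorm (k := k) ε (⇑A) := by
  classical
  open NAProofAux in
  set S := {r : ℝ | ∃ v : V, v ≠ 0 ∧ r = nn.N (A v) / nn.N v} with hS
  set S' := {r : ℝ | ∃ v : V, v ≠ 0 ∧ r = nn.N (A.symm v) / nn.N v} with hS'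
  have hA : opNorm nn (⇑A) = sSup S := rfl
  have hA' : opNorm nn (⇑A.symm) = sSup S' := rfl
  rw [hA, hA'] at h
  -- V is nontrivial
  rcases subsingleton_or_nontrivial V with hV | hV
  · exfalso
    have hSe : S = (∅ : Set ℝ) := by
      ext r
      simp only [hS, Set.mem_setOf_eq, Set.mem_empty_iff_false, iff_false]
      rintro ⟨v, hv, -⟩
      exact hv (Subsingleton.elim v 0)
    rw [hSe, Real.sSup_empty, zero_mul] at h
    norm_num at h
  obtain ⟨v0, hv0⟩ := exists_ne (0 : V)
  have hAne : ∀ v : V, v ≠ 0 → A v ≠ 0 := by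
    intro v hv hc
    exact hv (by simpa using A.injective (by simpa using hc))
  -- boundedness of both sets
  have hbddS : BddAbove S := by
    by_contra hb
    rw [Real.sSup_of_not_bddAbove hb, zero_mul] at h
    norm_num at h
  have hbddS' : BddAbove S' := by
    by_contra hb
    rw [Real.sSup_of_not_bddAbove hb, mul_zero] at h
    norm_num at h
  set c := sSup S with hc
  set c' := sSup S' with hc'
  have hc_ge : ∀ v : V, v ≠ 0 → nn.N (A v) / nn.N v ≤ c := fun v hv =>
    le_csSup hbddS ⟨v, hv, rfl⟩
  have hc'_ge : ∀ v : V, v ≠ 0 → nn.N (A.symm v) / nn.N v ≤ c' := fun v hv =>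
    le_csSup hbddS' ⟨v, hv, rfl⟩
  have hc_pos : 0 < c :=
    lt_of_lt_of_le (div_pos (nn.pos _ (hAne v0 hv0)) (nn.pos _ hv0)) (hc_ge v0 hv0)
  have hcinv : c' = c⁻¹ := eq_inv_of_mul_eq_one_right h
  -- the key: the ratio is constant
  have key : ∀ v : V, nn.N (A v) = c * nn.N v := by
    intro v
    by_cases hv : v = 0
    · rw [hv]
      simp [nn.map_zero']
    · have hNv := nn.pos v hv
      have hNAv := nn.pos _ (hAne v hv)
      have h1 : nn.N (A v) ≤ c * nn.N v := by
        have := hc_ge v hv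
        rwa [div_le_iff₀ hNv] at this
      have h2 : nn.N v / nn.N (A v) ≤ c' := by
        have := hc'_ge (A v) (hAne v hv)
        simpa using this
      rw [hcinv, div_le_iff₀ hNAv] at h2
      have h3 : c * nn.N v ≤ nn.N (A v) := by
        have h4 := mul_le_mul_of_nonneg_left h2 hc_pos.le
        rwa [← mul_assoc, mul_inv_cancel₀ hc_pos.ne', one_mul] at h4
      linarith
  have keyIter : ∀ (n : ℕ) (v : V), nn.N ((⇑A)^[n] v) = c ^ n * nn.N v := by
    intro n
    induction n with
    | zero => intro v; simp
    | succ n ih =>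
      intro v
      rw [Function.iterate_succ_apply', key, ih, pow_succ]
      ring
  -- c is a lower bound for all operator norms
  have main : ∀ nn' : NANorm k ε V, c ≤ opNorm nn' (⇑A) := by
    intro nn'
    obtain ⟨C1, hC10, hC1⟩ := NANorm.exists_le hε0 hε1 nn nn'
    obtain ⟨C2, hC20, hC2⟩ := NANorm.exists_le hε0 hε1 nn' nn
    set T := {r : ℝ | ∃ v : V, v ≠ 0 ∧ r = nn'.N (A v) / nn'.N v} with hT
    have hAT : opNorm nn' (⇑A) = sSup T := rfl
    have hbddT : BddAbove T := by
      refine ⟨C2 * c * C1, ?_⟩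
      rintro r ⟨v, hv, rfl⟩
      have hNv' := nn'.pos v hv
      rw [div_le_iff₀ hNv']
      calc nn'.N (A v) ≤ C2 * nn.N (A v) := hC2 _
        _ = C2 * (c * nn.N v) := by rw [key]
        _ ≤ C2 * (c * (C1 * nn'.N v)) := by
            have := hC1 v
            have h0 : (0:ℝ) ≤ C2 * c := mul_nonneg hC20.le hc_pos.le
            nlinarith
        _ = C2 * c * C1 * nn'.N v := by ring
    set s := sSup T with hsdef
    have hsmem : ∀ v : V, v ≠ 0 → nn'.N (A v) / nn'.N v ≤ s := fun v hv =>
      le_csSup hbddT ⟨v, hv, rfl⟩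
    have hs_pos : 0 < s :=
      lt_of_lt_of_le (div_pos (nn'.pos _ (hAne v0 hv0)) (nn'.pos _ hv0)) (hsmem v0 hv0)
    have hstep : ∀ v : V, nn'.N (A v) ≤ s * nn'.N v := by
      intro v
      by_cases hv : v = 0
      · rw [hv]
        simp [nn'.map_zero']
      · have := hsmem v hv
        rwa [div_le_iff₀ (nn'.pos v hv)] at this
    have hIter : ∀ (n : ℕ) (v : V), nn'.N ((⇑A)^[n] v) ≤ s ^ n * nn'.N v := by
      intro n
      induction n with
      | zero => intro v; simp
      | succ n ih =>
        intro v
        rw [Function.iterate_succ_apply']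
        calc nn'.N (A ((⇑A)^[n] v)) ≤ s * nn'.N ((⇑A)^[n] v) := hstep _
          _ ≤ s * (s ^ n * nn'.N v) := mul_le_mul_of_nonneg_left (ih v) hs_pos.le
          _ = s ^ (n + 1) * nn'.N v := by ring
    have hN0 : 0 < nn.N v0 := nn.pos v0 hv0
    have hcn : ∀ n : ℕ, c ^ n ≤ C1 * C2 * s ^ n := by
      intro n
      have h1 : c ^ n * nn.N v0 = nn.N ((⇑A)^[n] v0) := (keyIter n v0).symm
      have h2 : nn.N ((⇑A)^[n] v0) ≤ C1 * nn'.N ((⇑A)^[n] v0) := hC1 _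
      have h3 : nn'.N ((⇑A)^[n] v0) ≤ s ^ n * nn'.N v0 := hIter n v0
      have h4 : nn'.N v0 ≤ C2 * nn.N v0 := hC2 _
      have hsn : (0:ℝ) ≤ s ^ n := (pow_pos hs_pos n).le
      have h5 : c ^ n * nn.N v0 ≤ C1 * (s ^ n * (C2 * nn.N v0)) := by
        calc c ^ n * nn.N v0 = nn.N ((⇑A)^[n] v0) := h1
          _ ≤ C1 * nn'.N ((⇑A)^[n] v0) := h2
          _ ≤ C1 * (s ^ n * nn'.N v0) := mul_le_mul_of_nonneg_left h3 hC10.le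
          _ ≤ C1 * (s ^ n * (C2 * nn.N v0)) :=
              mul_le_mul_of_nonneg_left (mul_le_mul_of_nonneg_left h4 hsn) hC10.le
      have h6 : c ^ n * nn.N v0 ≤ (C1 * C2 * s ^ n) * nn.N v0 := by
        calc c ^ n * nn.N v0 ≤ C1 * (s ^ n * (C2 * nn.N v0)) := h5
          _ = (C1 * C2 * s ^ n) * nn.N v0 := by ring
      exact le_of_mul_le_mul_right (by linarith) hN0
    rw [hAT]
    by_contra hlt
    push_neg at hlt
    have hratio : 1 < c / s := (one_lt_div hs_pos).mpr hlt
    obtain ⟨n, hn⟩ := pow_unbounded_of_one_lt (C1 * C2) hratio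
    have hle : (c / s) ^ n ≤ C1 * C2 := by
      rw [div_pow, div_le_iff₀ (pow_pos hs_pos n)]
      exact hcn n
    linarith
  -- conclusion
  have hub : ∀ x ∈ {r : ℝ | ∃ nn' : NANorm k ε V, r = opNorm nn' (⇑A)}, c ≤ x := by
    rintro x ⟨nn', rfl⟩
    exact main nn'
  have hcmem : c ∈ {r : ℝ | ∃ nn' : NANorm k ε V, r = opNorm nn' (⇑A)} := ⟨nn, hA⟩
  rw [hA]
  show c = sInf {r : ℝ | ∃ nn' : NANorm k ε V, r = opNorm nn' (⇑A)}
  exact le_antisymm (le_csInf ⟨c, hcmem⟩ hub) (csInf_le ⟨c, hub⟩ hcmem)
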